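/- arXiv:2108.03943 — 2 statements merged into one kernel-verified Lean document; each statement's English description precedes it below -/
import Mathlib

section
/- Let G ≤ Sym(V) with |V| ≥ 3 and H ≤ Sₙ be transitive permutation groups. If the internal direct product Gⁿ = G × ⋯ × G (n factors, acting componentwise on the disjoint union of n copies of V) has the strict-EKR-property and H has the EKR-property, then the wreath product G ≀ H (acting on V × {1,…,n}) has the strict-EKR-property. -/
/-! ### Basic definitions: derangement graphs, intersecting sets, EKR properties -/

/-- The derangement graph of a permutation group `G ≤ Sym(V)`: vertices are the elements
of `G`, and distinct `g`, `h` are adjacent iff `g * h⁻¹` is fixed-point-free on `V`. -/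
def derGraph {V : Type*} (G : Subgroup (Equiv.Perm V)) : SimpleGraph G where
  Adj g h := g ≠ h ∧ ∀ v : V, ((g : Equiv.Perm V) * (h : Equiv.Perm V)⁻¹) v ≠ v
  symm := ⟨by
    rintro g h ⟨hne, hd⟩
    refine ⟨hne.symm, fun v hv => hd v ?_⟩
    have h2 := congrArg (⇑(((h : Equiv.Perm V) * (g : Equiv.Perm V)⁻¹)⁻¹)) hv
    simpa [mul_inv_rev] using h2.symm⟩
  loopless := ⟨fun g hg => hg.1 rfl⟩

/-- A subset `I` of a permutation group `G ≤ Sym(V)` is intersecting if any two of its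
elements agree on some point of `V`. -/
def IsIntersecting {V : Type*} (G : Subgroup (Equiv.Perm V)) (I : Set G) : Prop :=
  ∀ g ∈ I, ∀ h ∈ I, ∃ v : V, (g : Equiv.Perm V) v = (h : Equiv.Perm V) v

/-- A permutation group `G ≤ Sym(V)` is transitive if it acts transitively on `V`. -/
def IsTransitive {V : Type*} (G : Subgroup (Equiv.Perm V)) : Prop :=
  ∀ v w : V, ∃ g ∈ G, g v = w

/-- A permutation group is regular if it is transitive and all point stabilizers are trivial. -/
def IsRegularGroup {V : Type*} (G : Subgroup (Equiv.Perm V)) : Prop :=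
  IsTransitive G ∧ ∀ g ∈ G, ∀ v : V, g v = v → g = 1

/-- The stabilizer of a point `v`, as a subset of the permutation group `G`. -/
def stabSet {V : Type*} (G : Subgroup (Equiv.Perm V)) (v : V) : Set G :=
  {g : G | (g : Equiv.Perm V) v = v}

/-- The intersection density `ρ(G)` of a (transitive) permutation group `G`: the maximum of
`|I| / |G_v|` over all intersecting sets `I` of `G`, where `G_v` is a point stabilizer. -/
noncomputable def interDensity {V : Type*} (G : Subgroup (Equiv.Perm V)) : ℝ :=
  sSup {x : ℝ | ∃ (I : Set G) (v : V), IsIntersecting G I ∧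
    x = (Nat.card I : ℝ) / (Nat.card (stabSet G v) : ℝ)}

/-- A permutation group has the EKR-property if every intersecting set has size at most
the size of the largest point stabilizer. -/
def HasEKR {V : Type*} (G : Subgroup (Equiv.Perm V)) : Prop :=
  ∀ I : Set G, IsIntersecting G I → Nat.card I ≤ ⨆ v : V, Nat.card (stabSet G v)

/-- A permutation group has the strict-EKR-property if every intersecting set of maximum
size is a coset of a point stabilizer. -/
def HasStrictEKR {V : Type*} (G : Subgroup (Equiv.Perm V)) : Prop :=
  ∀ I : Set G, IsIntersecting G I →
    (∀ J : Set G, IsIntersecting G J → Nat.card J ≤ Nat.card I) →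
    ∃ (v : V) (a : G), I = (fun g => a * g) '' stabSet G v

/-! ### Graph products and related graph-theoretic notions -/

/-- The strong product of two simple graphs. -/
def strongProd {α β : Type*} (X : SimpleGraph α) (Y : SimpleGraph β) :
    SimpleGraph (α × β) where
  Adj p q := (p.1 = q.1 ∧ Y.Adj p.2 q.2) ∨ (p.2 = q.2 ∧ X.Adj p.1 q.1) ∨
    (X.Adj p.1 q.1 ∧ Y.Adj p.2 q.2)
  symm := ⟨by
    rintro p q (⟨h1, h2⟩ | ⟨h1, h2⟩ | ⟨h1, h2⟩)
    · exact Or.inl ⟨h1.symm, h2.symm⟩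
    · exact Or.inr (Or.inl ⟨h1.symm, h2.symm⟩)
    · exact Or.inr (Or.inr ⟨h1.symm, h2.symm⟩)⟩
  loopless := ⟨by
    rintro p (⟨_, h⟩ | ⟨_, h⟩ | ⟨h, _⟩)
    · exact Y.loopless.irrefl _ h
    · exact X.loopless.irrefl _ h
    · exact X.loopless.irrefl _ h⟩

/-- The tensor (direct, categorical) product of two simple graphs. -/
def tensorProd {α β : Type*} (X : SimpleGraph α) (Y : SimpleGraph β) :
    SimpleGraph (α × β) where
  Adj p q := X.Adj p.1 q.1 ∧ Y.Adj p.2 q.2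
  symm := ⟨fun _ _ ⟨h1, h2⟩ => ⟨h1.symm, h2.symm⟩⟩
  loopless := ⟨fun _ ⟨h1, _⟩ => X.loopless.irrefl _ h1⟩

/-- The tensor (direct) product of a family of simple graphs: two tuples are adjacent
iff they are adjacent in every coordinate (for a nonempty index type this coincides with
the definition below, where distinctness is required to keep the graph loopless). -/
def tensorPi {ι : Type*} {α : ι → Type*} (X : ∀ i, SimpleGraph (α i)) :
    SimpleGraph (∀ i, α i) where
  Adj f g := f ≠ g ∧ ∀ i, (X i).Adj (f i) (g i)
  symm := ⟨fun _ _ ⟨hne, h⟩ => ⟨hne.symm, fun i => (h i).symm⟩⟩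
  loopless := ⟨fun _ h => h.1 rfl⟩

/-- The disjoint union of `ι`-indexed copies of a simple graph `X`. -/
def copiesGraph (ι : Type*) {α : Type*} (X : SimpleGraph α) : SimpleGraph (ι × α) where
  Adj p q := p.1 = q.1 ∧ X.Adj p.2 q.2
  symm := ⟨fun _ _ ⟨h1, h2⟩ => ⟨h1.symm, h2.symm⟩⟩
  loopless := ⟨fun _ h => X.loopless.irrefl _ h.2⟩

/-- The lexicographic product (wreath product) `X[Y]` of simple graphs. -/
def lexProd {α β : Type*} (X : SimpleGraph α) (Y : SimpleGraph β) :
    SimpleGraph (α × β) where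
  Adj p q := X.Adj p.1 q.1 ∨ (p.1 = q.1 ∧ Y.Adj p.2 q.2)
  symm := ⟨by
    rintro p q (h | ⟨h1, h2⟩)
    · exact Or.inl h.symm
    · exact Or.inr ⟨h1.symm, h2.symm⟩⟩
  loopless := ⟨by
    rintro p (h | ⟨_, h⟩)
    · exact X.loopless.irrefl _ h
    · exact Y.loopless.irrefl _ h⟩

/-- A simple graph is complete multipartite with `k` parts if its vertex set can be
partitioned into `k` (nonempty) parts so that two vertices are adjacent iff they lie in
different parts. -/
def IsCompleteMultipartiteWith {α : Type*} (X : SimpleGraph α) (k : ℕ) : Prop :=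
  ∃ f : α → Fin k, Function.Surjective f ∧ ∀ a b : α, X.Adj a b ↔ f a ≠ f b

/-- An independent set (coclique) of a simple graph. -/
def IsIndep {α : Type*} (X : SimpleGraph α) (A : Set α) : Prop :=
  ∀ a ∈ A, ∀ b ∈ A, ¬ X.Adj a b

/-- The independence number `α(X)` of a simple graph. -/
noncomputable def indepNum {α : Type*} (X : SimpleGraph α) : ℕ :=
  sSup {k : ℕ | ∃ A : Set α, IsIndep X A ∧ Nat.card A = k}

/-- The closed neighbourhood `N[A]` of a set `A` of vertices. -/
def closedNbhd {α : Type*} (X : SimpleGraph α) (A : Set α) : Set α :=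
  {b | ∃ a ∈ A, a = b ∨ X.Adj a b}

/-- A graph `X` is IS-primitive if there is no non-maximum independent set `A` with
`|A| / |N[A]| = α(X) / |V(X)|`. -/
def IsISPrimitive {α : Type*} (X : SimpleGraph α) : Prop :=
  ¬ ∃ A : Set α, IsIndep X A ∧ Nat.card A < indepNum X ∧
    (Nat.card A : ℚ) / (Nat.card (closedNbhd X A) : ℚ) =
      (indepNum X : ℚ) / (Nat.card α : ℚ)

/-- A simple graph is vertex-transitive if its automorphism group acts transitively on the
vertices. -/
def IsVertexTransitive {α : Type*} (X : SimpleGraph α) : Prop :=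
  ∀ a b : α, ∃ e : X ≃g X, e a = b

/-! ### External and internal direct products of permutation groups -/

/-- The canonical monoid homomorphism `Sym(V) × Sym(W) → Sym(V × W)`. -/
def permProdCongrHom (V W : Type*) : Equiv.Perm V × Equiv.Perm W →* Equiv.Perm (V × W) where
  toFun p := Equiv.prodCongr p.1 p.2
  map_one' := Equiv.ext fun _ => rfl
  map_mul' := fun _ _ => Equiv.ext fun _ => rfl

/-- The external direct product of permutation groups `G ≤ Sym(V)` and `H ≤ Sym(W)`,
acting on `V × W` by `(g,h)⬝(v,w) = (g v, h w)`. -/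
def extProd {V W : Type*} (G : Subgroup (Equiv.Perm V)) (H : Subgroup (Equiv.Perm W)) :
    Subgroup (Equiv.Perm (V × W)) :=
  Subgroup.map (permProdCongrHom V W) (G.prod H)

/-- The internal direct product of a family of permutation groups `G i ≤ Sym(V i)`,
acting componentwise on the disjoint union `Σ i, V i`. -/
def intProd {ι : Type*} {V : ι → Type*} (G : ∀ i, Subgroup (Equiv.Perm (V i))) :
    Subgroup (Equiv.Perm (Σ i, V i)) :=
  Subgroup.map (Equiv.Perm.sigmaCongrRightHom V) (Subgroup.pi Set.univ G)

/-! ### Wreath products of permutation groups -/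

/-- The permutation of `V × {1,…,n}` associated to an element `((g₁,…,gₙ), h)` of the
wreath product: `(a, i) ↦ (gᵢ a, h i)`. -/
def wreathPerm {V : Type*} {n : ℕ} (g : Fin n → Equiv.Perm V) (h : Equiv.Perm (Fin n)) :
    Equiv.Perm (V × Fin n) where
  toFun p := (g p.2 p.1, h p.2)
  invFun p := ((g (h⁻¹ p.2))⁻¹ p.1, h⁻¹ p.2)
  left_inv := by rintro ⟨a, i⟩; simp
  right_inv := by rintro ⟨b, j⟩; simp

/-- The wreath product `G ≀ H` of `G ≤ Sym(V)` by `H ≤ Sₙ`, as a permutation group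
acting on `V × {1,…,n}`. -/
def wreathProd {V : Type*} {n : ℕ} (G : Subgroup (Equiv.Perm V))
    (H : Subgroup (Equiv.Perm (Fin n))) : Subgroup (Equiv.Perm (V × Fin n)) where
  carrier := {σ | ∃ (g : Fin n → Equiv.Perm V) (h : Equiv.Perm (Fin n)),
    (∀ i, g i ∈ G) ∧ h ∈ H ∧ σ = wreathPerm g h}
  one_mem' := ⟨fun _ => 1, 1, fun _ => G.one_mem, H.one_mem, Equiv.ext fun _ => rfl⟩
  mul_mem' := by
    rintro σ τ ⟨g, h, hg, hh, rfl⟩ ⟨g', h', hg', hh', rfl⟩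
    exact ⟨fun i => g (h' i) * g' i, h * h',
      fun i => G.mul_mem (hg _) (hg' _), H.mul_mem hh hh', Equiv.ext fun _ => rfl⟩
  inv_mem' := by
    rintro σ ⟨g, h, hg, hh, rfl⟩
    exact ⟨fun i => (g (h⁻¹ i))⁻¹, h⁻¹,
      fun i => G.inv_mem (hg _), H.inv_mem hh, Equiv.ext fun _ => rfl⟩

theorem mem_wreathProd {V : Type*} {n : ℕ} {G : Subgroup (Equiv.Perm V)}
    {H : Subgroup (Equiv.Perm (Fin n))} {σ : Equiv.Perm (V × Fin n)} :
    σ ∈ wreathProd G H ↔ ∃ (g : Fin n → Equiv.Perm V) (h : Equiv.Perm (Fin n)),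
      (∀ i, g i ∈ G) ∧ h ∈ H ∧ σ = wreathPerm g h := Iff.rfl
/-! ### Auxiliary lemmas -/

open Equiv

lemma wreathPerm_apply {V : Type*} {n : ℕ} (g : Fin n → Equiv.Perm V) (h : Equiv.Perm (Fin n))
    (a : V) (i : Fin n) : wreathPerm g h (a, i) = (g i a, h i) := rfl

lemma wreathPerm_eq_iff {V : Type*} {n : ℕ} [Nonempty V] {g g' : Fin n → Equiv.Perm V}
    {h h' : Equiv.Perm (Fin n)} : wreathPerm g h = wreathPerm g' h' ↔ g = g' ∧ h = h' := by
  constructor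
  · intro he
    constructor
    · funext i
      ext a
      have := congrArg (fun σ : Equiv.Perm (V × Fin n) => (σ (a, i)).1) he
      simpa [wreathPerm_apply] using this
    · apply Equiv.ext
      intro i
      obtain ⟨a⟩ := ‹Nonempty V›
      have := congrArg (fun σ : Equiv.Perm (V × Fin n) => (σ (a, i)).2) he
      simpa [wreathPerm_apply] using this
  · rintro ⟨rfl, rfl⟩; rfl

lemma wreathPerm_mul {V : Type*} {n : ℕ} (b g : Fin n → Equiv.Perm V)
    (τ h : Equiv.Perm (Fin n)) :
    wreathPerm b τ * wreathPerm g h = wreathPerm (fun j => b (h j) * g j) (τ * h) := by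
  ext p <;> rcases p with ⟨a, i⟩ <;> rfl

lemma wreathPerm_inv {V : Type*} {n : ℕ} (g : Fin n → Equiv.Perm V) (h : Equiv.Perm (Fin n)) :
    (wreathPerm g h)⁻¹ = wreathPerm (fun i => (g (h⁻¹ i))⁻¹) h⁻¹ := by
  exact Equiv.ext fun ⟨a, i⟩ => rfl

lemma mem_intProd {ι : Type*} {V : ι → Type*} {G : ∀ i, Subgroup (Equiv.Perm (V i))}
    {σ : Equiv.Perm (Σ i, V i)} :
    σ ∈ intProd G ↔ ∃ g : ∀ i, Equiv.Perm (V i), (∀ i, g i ∈ G i) ∧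
      σ = Equiv.Perm.sigmaCongrRightHom V g := by
  constructor
  · rintro ⟨g, hg, rfl⟩
    exact ⟨g, fun i => hg i (Set.mem_univ i), rfl⟩
  · rintro ⟨g, hg, rfl⟩
    exact ⟨g, fun i _ => hg i, rfl⟩

lemma card_image_mul_left {Γ : Type*} [Group Γ] (a : Γ) (s : Set Γ) :
    Nat.card ((fun g => a * g) '' s) = Nat.card s :=
  Nat.card_image_of_injective (mul_right_injective a) s

/-- Point stabilizers of a transitive group all have the same size. -/
lemma card_stabSet_congr {V : Type*} {G : Subgroup (Equiv.Perm V)} (hG : IsTransitive G)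
    (v w : V) : Nat.card (stabSet G v) = Nat.card (stabSet G w) := by
  obtain ⟨c, hc, hcv⟩ := hG v w
  let c' : G := ⟨c, hc⟩
  have himg : (fun g => c' * g * c'⁻¹) '' stabSet G v = stabSet G w := by
    ext k
    constructor
    · rintro ⟨g, hg, rfl⟩
      have hg' : (g : Equiv.Perm V) v = v := hg
      show (c * g * c⁻¹ : Equiv.Perm V) w = w
      simp [Equiv.Perm.mul_apply, ← hcv, hg']
    · intro hk
      refine ⟨c'⁻¹ * k * c', ?_, by group⟩
      have hk' : (k : Equiv.Perm V) w = w := hk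
      have hcw : (c⁻¹ : Equiv.Perm V) w = v := by rw [← hcv]; simp
      show ((c⁻¹ : Equiv.Perm V) * k * c : Equiv.Perm V) v = v
      simp [Equiv.Perm.mul_apply, hcv, hk', hcw]
  rw [← himg, Nat.card_image_of_injective]
  intro x y hxy
  simpa using hxy

/-- Point stabilizers of the internal power of a transitive group all have the same size. -/
lemma card_stabSet_intProd_congr {V : Type*} {n : ℕ} {G : Subgroup (Equiv.Perm V)}
    (hG : IsTransitive G) (p q : Σ _ : Fin n, V) :
    Nat.card (stabSet (intProd (fun _ : Fin n => G)) p) =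
      Nat.card (stabSet (intProd (fun _ : Fin n => G)) q) := by
  classical
  set K := intProd (fun _ : Fin n => G) with hK
  obtain ⟨i, v⟩ := p
  obtain ⟨j, w⟩ := q
  obtain ⟨d, hd, hdw⟩ := hG w v
  set s : Equiv.Perm (Fin n) := Equiv.swap i j with hs
  set T : Equiv.Perm (Σ _ : Fin n, V) :=
    { toFun := fun x => ⟨s x.1, d x.2⟩
      invFun := fun x => ⟨s x.1, d⁻¹ x.2⟩
      left_inv := fun ⟨k, a⟩ => by simp [hs]
      right_inv := fun ⟨k, a⟩ => by simp [hs] } with hT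
  have hTapp : ∀ k a, T ⟨k, a⟩ = ⟨s k, d a⟩ := fun _ _ => rfl
  have hTinv : ∀ k a, T⁻¹ ⟨k, a⟩ = ⟨s k, d⁻¹ a⟩ := fun _ _ => rfl
  have key : ∀ (e : Equiv.Perm V) (g : Fin n → Equiv.Perm V),
      (fun x => ⟨s x.1, e x.2⟩ : (Σ _ : Fin n, V) → (Σ _ : Fin n, V)) ∘
        (Equiv.Perm.sigmaCongrRightHom (fun _ : Fin n => V) g) ∘
        (fun x => ⟨s x.1, e⁻¹ x.2⟩) =
        Equiv.Perm.sigmaCongrRightHom (fun _ : Fin n => V)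
          (fun k => e * g (s k) * e⁻¹) := by
    intro e g
    funext ⟨k, a⟩
    show (⟨s (s k), e (g (s k) (e⁻¹ a))⟩ : Σ _ : Fin n, V) = ⟨k, e (g (s k) (e⁻¹ a))⟩
    simp [hs]
  have keyT : ∀ g : Fin n → Equiv.Perm V,
      T * (Equiv.Perm.sigmaCongrRightHom (fun _ : Fin n => V) g) * T⁻¹ =
        Equiv.Perm.sigmaCongrRightHom (fun _ : Fin n => V) (fun k => d * g (s k) * d⁻¹) := by
    intro g
    apply Equiv.ext
    intro x
    have := congrFun (key d g) x
    exact this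
  have keyT' : ∀ g : Fin n → Equiv.Perm V,
      T⁻¹ * (Equiv.Perm.sigmaCongrRightHom (fun _ : Fin n => V) g) * T =
        Equiv.Perm.sigmaCongrRightHom (fun _ : Fin n => V) (fun k => d⁻¹ * g (s k) * d) := by
    intro g
    apply Equiv.ext
    intro x
    have h2 := congrFun (key d⁻¹ g) x
    simp only [inv_inv] at h2
    exact h2
  have hFmem : ∀ k : K, (T * (k : Equiv.Perm (Σ _ : Fin n, V)) * T⁻¹) ∈ K := by
    intro k
    obtain ⟨g, hgG, hgeq⟩ := mem_intProd.mp k.2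
    rw [hgeq, keyT g]
    exact mem_intProd.mpr ⟨_, fun l => G.mul_mem (G.mul_mem hd (hgG (s l))) (G.inv_mem hd), rfl⟩
  set F : K → K := fun k => ⟨T * (k : Equiv.Perm (Σ _ : Fin n, V)) * T⁻¹, hFmem k⟩ with hF
  have hFinj : Function.Injective F := by
    intro x y hxy
    have := congrArg (fun z : K => (z : Equiv.Perm (Σ _ : Fin n, V))) hxy
    simp only [hF] at this
    ext1
    exact mul_left_cancel (mul_right_cancel this)
  have hdv : d⁻¹ v = w := by rw [← hdw]; simp
  have himg : F '' stabSet K ⟨j, w⟩ = stabSet K ⟨i, v⟩ := by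
    ext m
    constructor
    · rintro ⟨k, hk, rfl⟩
      have hk' : (k : Equiv.Perm (Σ _ : Fin n, V)) ⟨j, w⟩ = ⟨j, w⟩ := hk
      show (T * (k : Equiv.Perm (Σ _ : Fin n, V)) * T⁻¹) ⟨i, v⟩ = ⟨i, v⟩
      have h1 : T⁻¹ ⟨i, v⟩ = ⟨j, w⟩ := by rw [hTinv, hdv]; simp [hs]
      simp only [Equiv.Perm.mul_apply, h1, hk', hTapp, hdw]
      simp [hs]
    · intro hm
      have hm' : (m : Equiv.Perm (Σ _ : Fin n, V)) ⟨i, v⟩ = ⟨i, v⟩ := hm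
      have hmem2 : (T⁻¹ * (m : Equiv.Perm (Σ _ : Fin n, V)) * T) ∈ K := by
        obtain ⟨g, hgG, hgeq⟩ := mem_intProd.mp m.2
        rw [hgeq, keyT' g]
        exact mem_intProd.mpr ⟨_, fun l =>
          G.mul_mem (G.mul_mem (G.inv_mem hd) (hgG (s l))) hd, rfl⟩
      refine ⟨⟨T⁻¹ * (m : Equiv.Perm (Σ _ : Fin n, V)) * T, hmem2⟩, ?_, ?_⟩
      · show (T⁻¹ * (m : Equiv.Perm (Σ _ : Fin n, V)) * T) ⟨j, w⟩ = ⟨j, w⟩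
        have h1 : T ⟨j, w⟩ = ⟨i, v⟩ := by rw [hTapp, hdw]; simp [hs]
        simp only [Equiv.Perm.mul_apply, h1, hm', hTinv, hdv]
        simp [hs]
      · ext1
        show T * (T⁻¹ * (m : Equiv.Perm (Σ _ : Fin n, V)) * T) * T⁻¹ = m
        group
  rw [← himg, Nat.card_image_of_injective hFinj]

lemma sigma_stab_iff {V : Type*} {n : ℕ} (g : Fin n → Equiv.Perm V) (i : Fin n) (v : V) :
    (Equiv.Perm.sigmaCongrRightHom (fun _ : Fin n => V) g) ⟨i, v⟩ = ⟨i, v⟩ ↔ g i v = v := by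
  constructor
  · intro h
    have : (⟨i, g i v⟩ : Σ _ : Fin n, V) = ⟨i, v⟩ := h
    simpa using this
  · intro h
    show (⟨i, g i v⟩ : Σ _ : Fin n, V) = ⟨i, v⟩
    rw [h]

lemma card_stabSet_wreathProd {V : Type*} [Nonempty V] {n : ℕ} (G : Subgroup (Equiv.Perm V))
    (H : Subgroup (Equiv.Perm (Fin n))) (v : V) (i : Fin n) :
    Nat.card (stabSet (wreathProd G H) (v, i)) =
      Nat.card (stabSet (intProd (fun _ : Fin n => G)) ⟨i, v⟩) * Nat.card (stabSet H i) := by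
  classical
  set K := intProd (fun _ : Fin n => G) with hK
  set W := wreathProd G H with hW
  rw [← Nat.card_prod]
  have hrep := fun σ : W => (mem_wreathProd.mp σ.2)
  choose gp hp hgp hhp heq using hrep
  let f : (stabSet W (v, i) : Set W) → (stabSet K ⟨i, v⟩ : Set K) × (stabSet H i : Set H) :=
    fun σs =>
    (⟨⟨Equiv.Perm.sigmaCongrRightHom (fun _ : Fin n => V) (gp σs.1),
        mem_intProd.mpr ⟨gp σs.1, hgp σs.1, rfl⟩⟩, by
      have hσ' : (σs.1 : Equiv.Perm (V × Fin n)) (v, i) = (v, i) := σs.2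
      rw [heq σs.1, wreathPerm_apply] at hσ'
      exact (sigma_stab_iff _ _ _).mpr (congrArg Prod.fst hσ')⟩,
     ⟨⟨hp σs.1, hhp σs.1⟩, by
      have hσ' : (σs.1 : Equiv.Perm (V × Fin n)) (v, i) = (v, i) := σs.2
      rw [heq σs.1, wreathPerm_apply] at hσ'
      exact congrArg Prod.snd hσ'⟩)
  refine Nat.card_eq_of_bijective f ⟨?_, ?_⟩
  · -- injective
    rintro ⟨σ, hσ⟩ ⟨τ, hτ⟩ hst
    have h1' : gp σ = gp τ := by
      have h1 := congrArg (fun x : (stabSet K ⟨i, v⟩ : Set K) × (stabSet H i : Set H) =>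
        ((x.1 : K) : Equiv.Perm (Σ _ : Fin n, V))) hst
      exact Equiv.Perm.sigmaCongrRightHom_injective h1
    have h2' : hp σ = hp τ := by
      exact congrArg (fun x : (stabSet K ⟨i, v⟩ : Set K) × (stabSet H i : Set H) =>
        ((x.2 : H) : Equiv.Perm (Fin n))) hst
    apply Subtype.ext; apply Subtype.ext
    rw [show (σ : Equiv.Perm (V × Fin n)) = wreathPerm (gp σ) (hp σ) from heq σ,
      show (τ : Equiv.Perm (V × Fin n)) = wreathPerm (gp τ) (hp τ) from heq τ, h1', h2']
  · -- surjective
    rintro ⟨⟨k, hk⟩, ⟨η, hη⟩⟩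
    obtain ⟨g, hgG, hgeq⟩ := mem_intProd.mp k.2
    have hkv : g i v = v := by
      have hk' : (k : Equiv.Perm (Σ _ : Fin n, V)) ⟨i, v⟩ = ⟨i, v⟩ := hk
      rw [hgeq] at hk'
      exact (sigma_stab_iff _ _ _).mp hk'
    have hηi : (η : Equiv.Perm (Fin n)) i = i := hη
    have hmemW : wreathPerm g (η : Equiv.Perm (Fin n)) ∈ W :=
      mem_wreathProd.mpr ⟨g, η, hgG, η.2, rfl⟩
    set σ : W := ⟨wreathPerm g (η : Equiv.Perm (Fin n)), hmemW⟩ with hσdef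
    have hstab : σ ∈ stabSet W (v, i) := by
      show wreathPerm g (η : Equiv.Perm (Fin n)) (v, i) = (v, i)
      rw [wreathPerm_apply, hkv, hηi]
    refine ⟨⟨σ, hstab⟩, ?_⟩
    have hun : gp σ = g ∧ hp σ = (η : Equiv.Perm (Fin n)) := by
      apply wreathPerm_eq_iff.mp
      rw [← heq σ]
    refine Prod.ext (Subtype.ext (Subtype.ext ?_)) (Subtype.ext (Subtype.ext ?_))
    · show (Equiv.Perm.sigmaCongrRightHom (fun _ : Fin n => V) (gp σ) :
        Equiv.Perm (Σ _ : Fin n, V)) = (k : Equiv.Perm (Σ _ : Fin n, V))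
      rw [hun.1, ← hgeq]
    · show hp σ = (η : Equiv.Perm (Fin n))
      exact hun.2

lemma sigma_stab_iff' {V : Type*} {n : ℕ} (g : Fin n → Equiv.Perm V) (p : Σ _ : Fin n, V) :
    (Equiv.Perm.sigmaCongrRightHom (fun _ : Fin n => V) g) p = p ↔ g p.1 p.2 = p.2 := by
  obtain ⟨i, v⟩ := p
  exact sigma_stab_iff g i v

open MulAction in
lemma exists_derangement {V : Type*} [Fintype V] (G : Subgroup (Equiv.Perm V))
    (hG : IsTransitive G) (hV : 2 ≤ Fintype.card V) :
    ∃ d ∈ G, ∀ a : V, d a ≠ a := by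
  classical
  letI : Fintype G := Fintype.ofFinite G
  have hne : Nonempty V := Fintype.card_pos_iff.mp (by omega)
  obtain ⟨v₀⟩ := hne
  haveI : MulAction.IsPretransitive G V := by
    constructor
    intro v w
    obtain ⟨g, hg, hgv⟩ := hG v w
    exact ⟨⟨g, hg⟩, hgv⟩
  haveI : Fintype (Quotient (orbitRel G V)) := Fintype.ofFinite _
  have hΩ : Fintype.card (Quotient (orbitRel G V)) = 1 := by
    haveI : Subsingleton (Quotient (orbitRel G V)) := by
      constructor
      rintro ⟨x⟩ ⟨y⟩
      exact Quotient.sound (exists_smul_eq G y x)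
    have h1 : Fintype.card (Quotient (orbitRel G V)) ≤ 1 := Fintype.card_le_one_iff.2
      (fun a b => Subsingleton.elim a b)
    have h2 : 0 < Fintype.card (Quotient (orbitRel G V)) :=
      Fintype.card_pos_iff.2 ⟨⟦v₀⟧⟩
    omega
  have hsum := MulAction.sum_card_fixedBy_eq_card_orbits_mul_card_group G V
  rw [hΩ, one_mul] at hsum
  by_contra hcon
  push_neg at hcon
  -- every element of G has a fixed point
  have hfix : ∀ g : G, 0 < Fintype.card (fixedBy V g) := by
    intro g
    obtain ⟨a, ha⟩ := hcon g g.2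
    refine Fintype.card_pos_iff.2 ⟨⟨a, ?_⟩⟩
    exact ha
  have hone : Fintype.card (fixedBy V (1 : G)) = Fintype.card V := by
    apply Fintype.card_congr
    apply Equiv.subtypeUnivEquiv
    intro x
    simp [MulAction.mem_fixedBy]
  have hbig : Fintype.card G - 1 + Fintype.card V ≤ ∑ g : G, Fintype.card (fixedBy V g) := by
    classical
    rw [← Finset.sum_erase_add _ _ (Finset.mem_univ (1 : G)), hone]
    have h3 : (Finset.univ.erase (1 : G)).card ≤
        ∑ g ∈ Finset.univ.erase (1 : G), Fintype.card (fixedBy V g) := by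
      calc (Finset.univ.erase (1 : G)).card
          = ∑ _g ∈ Finset.univ.erase (1 : G), 1 := by simp
        _ ≤ _ := Finset.sum_le_sum (fun g _ => hfix g)
    have h4 : (Finset.univ.erase (1 : G)).card = Fintype.card G - 1 := by
      rw [Finset.card_erase_of_mem (Finset.mem_univ _), Finset.card_univ]
    omega
  have hGpos : 0 < Fintype.card G := Fintype.card_pos
  omega

/-- Let `G ≤ Sym(V)` with `|V| ≥ 3` and `H ≤ Sₙ` be transitive. If the
internal direct product `Gⁿ` has the strict-EKR-property and `H` has the EKR-property,
then `G ≀ H` has the strict-EKR-property. -/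
theorem wreathProd_hasStrictEKR_of_intProd {V : Type*} [Fintype V]
    (hV : 3 ≤ Fintype.card V) {n : ℕ} (G : Subgroup (Equiv.Perm V))
    (H : Subgroup (Equiv.Perm (Fin n))) (hG : IsTransitive G) (hH : IsTransitive H)
    (hGn : HasStrictEKR (intProd (fun _ : Fin n => G))) (hEKR : HasEKR H) :
    HasStrictEKR (wreathProd G H) := by
  classical
  intro I hI hImax
  rcases Nat.eq_zero_or_pos n with hn0 | hnpos
  · -- degenerate case `n = 0`: the hypothesis `hGn` is contradictory
    exfalso
    subst hn0
    haveI hempty : IsEmpty (Σ _ : Fin 0, V) := ⟨fun p => p.1.elim0⟩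
    have h1 : IsIntersecting (intProd fun _ : Fin 0 => G) (∅ : Set _) := by
      intro g hg; cases hg
    have h2 : ∀ J : Set (intProd fun _ : Fin 0 => G),
        IsIntersecting (intProd fun _ : Fin 0 => G) J →
        Nat.card J ≤ Nat.card (∅ : Set (intProd fun _ : Fin 0 => G)) := by
      intro J hJ
      have hJ0 : J = ∅ := by
        ext σ
        simp only [Set.mem_empty_iff_false, iff_false]
        intro hσ
        obtain ⟨p, -⟩ := hJ σ hσ σ hσ
        exact hempty.false p
      rw [hJ0]
    obtain ⟨p, -, -⟩ := hGn ∅ h1 h2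
    exact hempty.false p
  -- main case `n ≥ 1`
  haveI hVne : Nonempty V := Fintype.card_pos_iff.mp (by omega)
  haveI : Nonempty (Fin n) := ⟨⟨0, hnpos⟩⟩
  let v₀ : V := Classical.arbitrary V
  set i₀ : Fin n := ⟨0, hnpos⟩ with hi₀
  let K := intProd (fun _ : Fin n => G)
  let W := wreathProd G H
  set M := Nat.card (stabSet K ⟨i₀, v₀⟩) with hMdef
  set s := Nat.card (stabSet H i₀) with hsdef
  obtain ⟨d, hdG, hder⟩ := exists_derangement G hG (by omega)
  -- canonical representations
  have hrepW := fun σ : W => (mem_wreathProd.mp σ.2)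
  choose gp hp hgp hhp heq using hrepW
  have hrepK := fun k : K => (mem_intProd.mp k.2)
  choose cp hcp hck using hrepK
  have cp_eq : ∀ (k : K) (g : Fin n → Equiv.Perm V),
      (k : Equiv.Perm (Σ _ : Fin n, V)) = Equiv.Perm.sigmaCongrRightHom _ g → cp k = g :=
    fun k g h => Equiv.Perm.sigmaCongrRightHom_injective ((hck k).symm.trans h)
  have gphp_eq : ∀ (σ : W) (g : Fin n → Equiv.Perm V) (h : Equiv.Perm (Fin n)),
      (σ : Equiv.Perm (V × Fin n)) = wreathPerm g h → gp σ = g ∧ hp σ = h :=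
    fun σ g h he => wreathPerm_eq_iff.mp ((heq σ).symm.trans he)
  let mkK : ∀ (g : Fin n → Equiv.Perm V), (∀ i, g i ∈ G) → K := fun g hg =>
    ⟨Equiv.Perm.sigmaCongrRightHom _ g, mem_intProd.mpr ⟨g, hg, rfl⟩⟩
  have cp_mkK : ∀ g hg, cp (mkK g hg) = g := fun g hg => cp_eq _ _ rfl
  let mkW : ∀ (g : Fin n → Equiv.Perm V) (h : Equiv.Perm (Fin n)),
      (∀ i, g i ∈ G) → h ∈ H → W := fun g h hg hh =>
    ⟨wreathPerm g h, mem_wreathProd.mpr ⟨g, h, hg, hh, rfl⟩⟩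
  -- fibers of `I` over `H`
  let κ : K → H → W := fun k η => mkW (cp k) (η : Equiv.Perm (Fin n)) (hcp k) η.2
  let Jset : H → Set K := fun η => {k : K | κ k η ∈ I}
  let ηOf : W → H := fun σ => ⟨hp σ, hhp σ⟩
  let kOf : W → K := fun σ => mkK (gp σ) (hgp σ)
  let πI : Set H := ηOf '' I
  have κ_kOf : ∀ σ : W, κ (kOf σ) (ηOf σ) = σ := by
    intro σ
    apply Subtype.ext
    show wreathPerm (cp (mkK (gp σ) (hgp σ))) (hp σ) = (σ : Equiv.Perm (V × Fin n))
    rw [cp_mkK (gp σ) (hgp σ)]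
    exact (heq σ).symm
  have kOf_mem : ∀ σ : W, σ ∈ I → kOf σ ∈ Jset (ηOf σ) := by
    intro σ hσ
    show κ (kOf σ) (ηOf σ) ∈ I
    rw [κ_kOf σ]
    exact hσ
  -- the projection of `I` to `H` is intersecting
  have p1 : IsIntersecting H πI := by
    rintro η ⟨σ, hσ, rfl⟩ η' ⟨σ', hσ', rfl⟩
    obtain ⟨⟨a, i⟩, hai⟩ := hI σ hσ σ' hσ'
    refine ⟨i, ?_⟩
    have h1 : (σ : Equiv.Perm (V × Fin n)) (a, i) = (σ' : Equiv.Perm (V × Fin n)) (a, i) := hai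
    rw [heq σ, heq σ', wreathPerm_apply, wreathPerm_apply] at h1
    exact congrArg Prod.snd h1
  -- all `H`-stabilizers have size `s`, so `|πI| ≤ s`
  have hstabH : ∀ i : Fin n, Nat.card (stabSet H i) = s := fun i => card_stabSet_congr hH i i₀
  have p2 : Nat.card πI ≤ s := by
    refine le_trans (hEKR πI p1) ?_
    have : (⨆ i : Fin n, Nat.card (stabSet H i)) = s := by
      rw [show (fun i : Fin n => Nat.card (stabSet H i)) = fun _ => s from funext hstabH]
      exact ciSup_const
    omega
  -- each fiber is intersecting in `K`
  have p3 : ∀ η : H, IsIntersecting K (Jset η) := by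
    intro η k hk k' hk'
    obtain ⟨⟨a, i⟩, hai⟩ := hI (κ k η) hk (κ k' η) hk'
    have h1 : (wreathPerm (cp k) (η : Equiv.Perm (Fin n))) (a, i) =
        (wreathPerm (cp k') (η : Equiv.Perm (Fin n))) (a, i) := hai
    rw [wreathPerm_apply, wreathPerm_apply] at h1
    have h2 : cp k i a = cp k' i a := congrArg Prod.fst h1
    refine ⟨⟨i, a⟩, ?_⟩
    rw [hck k, hck k']
    show (⟨i, cp k i a⟩ : Σ _ : Fin n, V) = ⟨i, cp k' i a⟩
    rw [h2]
  -- the EKR bound for `K` (from strict-EKR)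
  have p4 : ∀ J : Set K, IsIntersecting K J → Nat.card J ≤ M := by
    have hSne : (Nat.card (∅ : Set K)) ∈
        {m | ∃ J : Set K, IsIntersecting K J ∧ Nat.card J = m} :=
      ⟨∅, fun g hg => absurd hg (Set.notMem_empty g), rfl⟩
    have hSbdd : BddAbove {m | ∃ J : Set K, IsIntersecting K J ∧ Nat.card J = m} := by
      refine ⟨Nat.card K, ?_⟩
      rintro m ⟨J, hJ, rfl⟩
      exact Nat.card_le_card_of_injective Subtype.val Subtype.val_injective
    obtain ⟨Jm, hJm, hJmcard⟩ := Nat.sSup_mem ⟨_, hSne⟩ hSbdd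
    have hJmmax : ∀ J : Set K, IsIntersecting K J → Nat.card J ≤ Nat.card Jm := by
      intro J hJ
      rw [hJmcard]
      exact le_csSup hSbdd ⟨J, hJ, rfl⟩
    obtain ⟨p, a, hcoset⟩ := hGn Jm hJm hJmmax
    intro J hJ
    calc Nat.card J ≤ Nat.card Jm := hJmmax J hJ
      _ = Nat.card (stabSet K p) := by rw [hcoset, card_image_mul_left]
      _ = M := card_stabSet_intProd_congr hG p ⟨i₀, v₀⟩
  -- counting: `|I| = Σ |fibers|`, lower and upper bounds
  haveI : Fintype W := Fintype.ofFinite _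
  haveI : Fintype K := Fintype.ofFinite _
  haveI : Fintype H := Fintype.ofFinite _
  have hM1 : 1 ≤ M := by
    rw [hMdef]
    have h1m : (1 : K) ∈ stabSet K ⟨i₀, v₀⟩ := by
      show ((1 : K) : Equiv.Perm (Σ _ : Fin n, V)) ⟨i₀, v₀⟩ = ⟨i₀, v₀⟩
      simp
    have : Nonempty (stabSet K ⟨i₀, v₀⟩) := ⟨⟨1, h1m⟩⟩
    exact Nat.card_pos
  have hPint : IsIntersecting W (stabSet W (v₀, i₀)) := by
    intro σ hσ τ hτ
    exact ⟨(v₀, i₀), (hσ : (σ : Equiv.Perm (V × Fin n)) _ = _).trans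
      (hτ : (τ : Equiv.Perm (V × Fin n)) _ = _).symm⟩
  have hlow : s * M ≤ Nat.card I := by
    have h1 := hImax (stabSet W (v₀, i₀)) hPint
    rw [card_stabSet_wreathProd G H v₀ i₀, ← hMdef, ← hsdef, Nat.mul_comm] at h1
    exact h1
  have hdec : I.toFinset.card =
      ∑ η ∈ πI.toFinset, (I.toFinset.filter (fun σ => ηOf σ = η)).card := by
    apply Finset.card_eq_sum_card_fiberwise
    intro σ hσ
    exact Set.mem_toFinset.mpr ⟨σ, Set.mem_toFinset.mp hσ, rfl⟩
  have hfib : ∀ η : H, (I.toFinset.filter (fun σ => ηOf σ = η)).card = Nat.card (Jset η) := by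
    intro η
    rw [Nat.card_coe_set_eq, Set.ncard_eq_toFinset_card']
    apply Finset.card_bij (fun σ _ => kOf σ)
    · intro σ hσ
      rw [Finset.mem_filter] at hσ
      apply Set.mem_toFinset.mpr
      have := kOf_mem σ (Set.mem_toFinset.mp hσ.1)
      rwa [hσ.2] at this
    · intro σ hσ σ' hσ' hk
      rw [Finset.mem_filter] at hσ hσ'
      have hgpe : gp σ = gp σ' := by
        rw [← cp_mkK (gp σ) (hgp σ), ← cp_mkK (gp σ') (hgp σ')]
        exact congrArg cp hk
      have hhpe : hp σ = hp σ' := by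
        have := hσ.2.trans hσ'.2.symm
        exact congrArg (fun x : H => (x : Equiv.Perm (Fin n))) this
      apply Subtype.ext
      rw [heq σ, heq σ', hgpe, hhpe]
    · intro k hk
      refine ⟨κ k η, ?_, ?_⟩
      · rw [Finset.mem_filter]
        constructor
        · exact Set.mem_toFinset.mpr (Set.mem_toFinset.mp hk : k ∈ Jset η)
        · apply Subtype.ext
          exact (gphp_eq (κ k η) (cp k) (η : Equiv.Perm (Fin n)) rfl).2
      · apply Subtype.ext
        show (Equiv.Perm.sigmaCongrRightHom _ (gp (κ k η)) : Equiv.Perm (Σ _ : Fin n, V))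
          = (k : Equiv.Perm (Σ _ : Fin n, V))
        rw [(gphp_eq (κ k η) (cp k) (η : Equiv.Perm (Fin n)) rfl).1, ← hck k]
  have hcardI : Nat.card I = I.toFinset.card := by
    rw [Nat.card_coe_set_eq, Set.ncard_eq_toFinset_card']
  have hcardπ : πI.toFinset.card = Nat.card πI := by
    rw [Nat.card_coe_set_eq, Set.ncard_eq_toFinset_card']
  have hup : Nat.card I ≤ πI.toFinset.card * M := by
    rw [hcardI, hdec]
    calc ∑ η ∈ πI.toFinset, (I.toFinset.filter (fun σ => ηOf σ = η)).card
        ≤ ∑ _η ∈ πI.toFinset, M := by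
          apply Finset.sum_le_sum
          intro η _
          rw [hfib η]
          exact p4 (Jset η) (p3 η)
      _ = πI.toFinset.card * M := by rw [Finset.sum_const, smul_eq_mul]
  have hπs : πI.toFinset.card = s := by
    have h1 : πI.toFinset.card ≤ s := hcardπ ▸ p2
    nlinarith [hlow, hup]
  have hIcard : Nat.card I = s * M := by
    have := hup
    rw [hπs] at this
    omega
  have p5 : ∀ η : H, η ∈ πI → Nat.card (Jset η) = M := by
    intro η hη
    by_contra hne
    have hlt : Nat.card (Jset η) < M := lt_of_le_of_ne (p4 (Jset η) (p3 η)) hne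
    have hstrict : ∑ η' ∈ πI.toFinset, (I.toFinset.filter (fun σ => ηOf σ = η')).card
        < ∑ _η ∈ πI.toFinset, M := by
      apply Finset.sum_lt_sum
      · intro η' _
        rw [hfib η']
        exact p4 (Jset η') (p3 η')
      · exact ⟨η, Set.mem_toFinset.mpr hη, by rw [hfib η]; exact hlt⟩
    rw [Finset.sum_const, smul_eq_mul, hπs, ← hdec, ← hcardI, hIcard] at hstrict
    omega
  -- coset structure of each fiber
  have cp_mul : ∀ j k : K, cp (j * k) = fun i => cp j i * cp k i := by
    intro j k
    apply cp_eq
    show (j : Equiv.Perm (Σ _ : Fin n, V)) * (k : Equiv.Perm (Σ _ : Fin n, V)) = _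
    rw [hck j, hck k]
    exact (map_mul (Equiv.Perm.sigmaCongrRightHom _) (cp j) (cp k)).symm
  have cp_inv : ∀ k : K, cp k⁻¹ = fun i => (cp k i)⁻¹ := by
    intro k
    apply cp_eq
    show ((k : Equiv.Perm (Σ _ : Fin n, V)))⁻¹ = _
    rw [hck k]
    exact (map_inv (Equiv.Perm.sigmaCongrRightHom _) (cp k)).symm
  have hdata := fun η : πI => hGn (Jset η.1) (p3 η.1)
    (fun J hJ => by rw [p5 η.1 η.2]; exact p4 J hJ)
  choose pt aK hcoset using hdata
  let Cf : πI → Set (Equiv.Perm V) := fun η =>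
    (fun x => cp (aK η) (pt η).1 * x) '' {x : Equiv.Perm V | x ∈ G ∧ x (pt η).2 = (pt η).2}
  have f3 : ∀ (η : πI) (k : K), k ∈ Jset η.1 ↔ cp k (pt η).1 ∈ Cf η := by
    intro η k
    rw [show (Jset η.1 : Set K) = _ from hcoset η]
    constructor
    · rintro ⟨m, hm, rfl⟩
      refine ⟨cp m (pt η).1, ⟨hcp m _, ?_⟩, ?_⟩
      · have hm' : (m : Equiv.Perm (Σ _ : Fin n, V)) (pt η) = pt η := hm
        rw [hck m] at hm'
        exact (sigma_stab_iff' _ _).mp hm'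
      · rw [cp_mul]
    · rintro ⟨x, ⟨hxG, hxv⟩, hxe⟩
      refine ⟨(aK η)⁻¹ * k, ?_, by group⟩
      show ((aK η)⁻¹ * k : K) ∈ stabSet K (pt η)
      have hcpx : cp ((aK η)⁻¹ * k) (pt η).1 = x := by
        rw [cp_mul, cp_inv]
        show (cp (aK η) (pt η).1)⁻¹ * cp k (pt η).1 = x
        rw [← hxe]
        simp [mul_assoc]
      show (((aK η)⁻¹ * k : K) : Equiv.Perm (Σ _ : Fin n, V)) (pt η) = pt η
      rw [hck _]
      apply (sigma_stab_iff' _ _).mpr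
      rw [hcpx]
      exact hxv
  have f4 : ∀ (η : πI) (g : Fin n → Equiv.Perm V) (hg : ∀ i, g i ∈ G),
      g (pt η).1 ∈ Cf η → mkW g (η.1 : Equiv.Perm (Fin n)) hg η.1.2 ∈ I := by
    intro η g hg hmem
    have hk : mkK g hg ∈ Jset η.1 := by
      rw [f3 η]
      rw [cp_mkK g hg]
      exact hmem
    have : κ (mkK g hg) η.1 ∈ I := hk
    convert this using 1
    apply Subtype.ext
    show wreathPerm g (η.1 : Equiv.Perm (Fin n)) = wreathPerm (cp (mkK g hg)) _
    rw [cp_mkK g hg]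
  have f4' : ∀ (η : πI) (x : Equiv.Perm V), x ∈ Cf η → x ∈ G := by
    rintro η x ⟨y, ⟨hyG, -⟩, rfl⟩
    exact G.mul_mem (hcp _ _) hyG
  have f5 : ∀ η : πI, cp (aK η) (pt η).1 ∈ Cf η :=
    fun η => ⟨1, ⟨G.one_mem, by simp⟩, mul_one _⟩
  have f6 : ∀ (η : πI) (x y : Equiv.Perm V), x ∈ Cf η → y ∈ Cf η →
      x (pt η).2 = y (pt η).2 := by
    rintro η x y ⟨x', ⟨-, hx'⟩, rfl⟩ ⟨y', ⟨-, hy'⟩, rfl⟩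
    show cp (aK η) (pt η).1 (x' (pt η).2) = cp (aK η) (pt η).1 (y' (pt η).2)
    rw [hx', hy']
  -- any two realizable tuples must intersect
  have clash : ∀ (η η' : πI) (g g' : Fin n → Equiv.Perm V) (hg : ∀ i, g i ∈ G)
      (hg' : ∀ i, g' i ∈ G), g (pt η).1 ∈ Cf η → g' (pt η').1 ∈ Cf η' →
      ∃ (i : Fin n) (a : V),
        (η.1 : Equiv.Perm (Fin n)) i = (η'.1 : Equiv.Perm (Fin n)) i ∧ g i a = g' i a := by
    intro η η' g g' hg hg' hm hm'
    obtain ⟨⟨a, i⟩, hai⟩ := hI _ (f4 η g hg hm) _ (f4 η' g' hg' hm')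
    have h1 : (wreathPerm g (η.1 : Equiv.Perm (Fin n))) (a, i) =
        (wreathPerm g' (η'.1 : Equiv.Perm (Fin n))) (a, i) := hai
    rw [wreathPerm_apply, wreathPerm_apply] at h1
    exact ⟨i, a, congrArg Prod.snd h1, congrArg Prod.fst h1⟩
  -- (A) all fibers are supported on the same coordinate
  have hA : ∀ η η' : πI, (pt η).1 = (pt η').1 := by
    intro η η'
    by_contra hne
    set i1 := (pt η).1 with hi1
    set i2 := (pt η').1 with hi2
    set c1 := cp (aK η) (pt η).1 with hc1
    set c2 := cp (aK η') (pt η').1 with hc2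
    set g : Fin n → Equiv.Perm V :=
      fun j => if j = i1 then c1 else (if j = i2 then d * c2 else 1) with hgdef
    set g' : Fin n → Equiv.Perm V := fun j => if j = i2 then c2 else d * g j with hg'def
    have hgG : ∀ j, g j ∈ G := by
      intro j
      rw [hgdef]
      dsimp only
      split
      · exact f4' η c1 (f5 η)
      · split
        · exact G.mul_mem hdG (f4' η' c2 (f5 η'))
        · exact G.one_mem
    have hg'G : ∀ j, g' j ∈ G := by
      intro j
      rw [hg'def]
      dsimp only
      split
      · exact f4' η' c2 (f5 η')
      · exact G.mul_mem hdG (hgG j)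
    have hgm : g i1 ∈ Cf η := by
      rw [hgdef]; simpa [hi1] using f5 η
    have hg'm : g' i2 ∈ Cf η' := by
      rw [hg'def]; simpa using f5 η'
    obtain ⟨i, a, -, hia⟩ := clash η η' g g' hgG hg'G hgm hg'm
    by_cases hi1 : i = i1 <;> by_cases hi2 : i = i2
    · exact hne (hi1.symm.trans hi2)
    · subst hi1
      simp only [hgdef, hg'def, if_pos rfl, if_neg hi2, Equiv.Perm.mul_apply] at hia
      exact hder (c1 a) hia.symm
    · subst hi2
      simp only [hgdef, hg'def, if_pos rfl, if_neg hi1, Equiv.Perm.mul_apply] at hia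
      exact hder (c2 a) hia
    · simp only [hgdef, hg'def, if_neg hi1, if_neg hi2, Equiv.Perm.mul_apply,
        Equiv.Perm.one_apply] at hia
      exact hder a hia.symm
  -- (B) all elements of `πI` agree at the common coordinate
  have hB : ∀ η η' : πI,
      (η.1 : Equiv.Perm (Fin n)) (pt η).1 = (η'.1 : Equiv.Perm (Fin n)) (pt η).1 := by
    intro η η'
    by_contra hne
    set i1 := (pt η).1 with hi1
    set c1 := cp (aK η) (pt η).1 with hc1
    set c2 := cp (aK η') (pt η').1 with hc2
    have hpt : (pt η').1 = i1 := (hA η η').symm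
    set g : Fin n → Equiv.Perm V := fun j => if j = i1 then c1 else 1 with hgdef
    set g' : Fin n → Equiv.Perm V := fun j => if j = i1 then c2 else d with hg'def
    have hgG : ∀ j, g j ∈ G := by
      intro j
      rw [hgdef]; dsimp only; split
      · exact f4' η c1 (f5 η)
      · exact G.one_mem
    have hg'G : ∀ j, g' j ∈ G := by
      intro j
      rw [hg'def]; dsimp only; split
      · exact f4' η' c2 (f5 η')
      · exact hdG
    have hgm : g (pt η).1 ∈ Cf η := by
      rw [hgdef]; simpa [hi1] using f5 η
    have hg'm : g' (pt η').1 ∈ Cf η' := by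
      rw [hg'def, hpt]; simpa using f5 η'
    obtain ⟨i, a, hcond, hia⟩ := clash η η' g g' hgG hg'G hgm hg'm
    by_cases hi1' : i = i1
    · exact hne (hi1' ▸ hcond)
    · simp only [hgdef, hg'def, if_neg hi1', Equiv.Perm.one_apply] at hia
      exact hder a hia.symm
  -- (C) the coset sets are cross-intersecting
  have hC : ∀ (η η' : πI) (x y : Equiv.Perm V), x ∈ Cf η → y ∈ Cf η' →
      ∃ a : V, x a = y a := by
    intro η η' x y hx hy
    by_contra hne
    push_neg at hne
    set i1 := (pt η).1 with hi1
    have hpt : (pt η').1 = i1 := (hA η η').symm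
    set g : Fin n → Equiv.Perm V := fun j => if j = i1 then x else 1 with hgdef
    set g' : Fin n → Equiv.Perm V := fun j => if j = i1 then y else d with hg'def
    have hgG : ∀ j, g j ∈ G := by
      intro j
      rw [hgdef]; dsimp only; split
      · exact f4' η x hx
      · exact G.one_mem
    have hg'G : ∀ j, g' j ∈ G := by
      intro j
      rw [hg'def]; dsimp only; split
      · exact f4' η' y hy
      · exact hdG
    have hgm : g (pt η).1 ∈ Cf η := by
      rw [hgdef]; simpa [hi1] using hx
    have hg'm : g' (pt η').1 ∈ Cf η' := by
      rw [hg'def, hpt]; simpa using hy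
    obtain ⟨i, a, -, hia⟩ := clash η η' g g' hgG hg'G hgm hg'm
    by_cases hi1' : i = i1
    · subst hi1'
      simp only [hgdef, hg'def, if_pos rfl] at hia
      exact hne a hia
    · simp only [hgdef, hg'def, if_neg hi1', Equiv.Perm.one_apply] at hia
      exact hder a hia.symm
  -- (C2) all coset sets are equal
  have hC2 : ∀ η η' : πI, Cf η' ⊆ Cf η := by
    intro η η' y hy
    by_contra hyC
    set U : Set K := {k | cp k (pt η).1 ∈ Cf η ∪ Cf η'} with hUdef
    have hUint : IsIntersecting K U := by
      intro k hk k' hk'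
      have hagree : ∃ a : V, cp k (pt η).1 a = cp k' (pt η).1 a := by
        rcases hk with hk | hk <;> rcases hk' with hk' | hk'
        · exact ⟨(pt η).2, f6 η _ _ hk hk'⟩
        · exact hC η η' _ _ hk hk'
        · obtain ⟨a, ha⟩ := hC η η' _ _ hk' hk
          exact ⟨a, ha.symm⟩
        · exact ⟨(pt η').2, f6 η' _ _ hk hk'⟩
      obtain ⟨a, ha⟩ := hagree
      refine ⟨⟨(pt η).1, a⟩, ?_⟩
      rw [hck k, hck k']
      show (⟨(pt η).1, cp k (pt η).1 a⟩ : Σ _ : Fin n, V) = ⟨(pt η).1, cp k' (pt η).1 a⟩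
      rw [ha]
    have hsub : Jset η.1 ⊆ U := fun k hk => Or.inl ((f3 η k).mp hk)
    set gy : Fin n → Equiv.Perm V := fun j => if j = (pt η).1 then y else 1 with hgydef
    have hgyG : ∀ j, gy j ∈ G := by
      intro j
      rw [hgydef]; dsimp only; split
      · exact f4' η' y hy
      · exact G.one_mem
    have hky1 : cp (mkK gy hgyG) (pt η).1 = y := by
      rw [cp_mkK gy hgyG, hgydef]; simp
    have hkyU : mkK gy hgyG ∈ U := by
      show cp (mkK gy hgyG) (pt η).1 ∈ Cf η ∪ Cf η'
      rw [hky1]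
      exact Or.inr hy
    have hkyJ : mkK gy hgyG ∉ Jset η.1 := by
      intro hmem
      exact hyC (hky1 ▸ (f3 η _).mp hmem)
    have hss : Jset η.1 ⊂ U := ⟨hsub, fun hUs => hkyJ (hUs hkyU)⟩
    have hlt : Nat.card (Jset η.1) < Nat.card U := by
      rw [Nat.card_coe_set_eq, Nat.card_coe_set_eq]
      exact Set.ncard_lt_ncard hss (Set.toFinite U)
    rw [p5 η.1 η.2] at hlt
    exact absurd (p4 U hUint) (by omega)
  -- final assembly
  have hs1 : 1 ≤ s := by
    rw [hsdef]
    have h1m : (1 : H) ∈ stabSet H i₀ := by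
      show ((1 : H) : Equiv.Perm (Fin n)) i₀ = i₀
      simp
    have : Nonempty (stabSet H i₀) := ⟨⟨1, h1m⟩⟩
    exact Nat.card_pos
  have hIne : I.Nonempty := by
    have hpos : 0 < Nat.card I := by
      rw [hIcard]
      exact Nat.mul_pos hs1 hM1
    rw [Nat.card_coe_set_eq] at hpos
    exact (Set.ncard_pos (Set.toFinite I)).mp hpos
  obtain ⟨σ₀, hσ₀⟩ := hIne
  let η₀ : πI := ⟨ηOf σ₀, ⟨σ₀, hσ₀, rfl⟩⟩
  set istar := (pt η₀).1 with histar
  set vstar := (pt η₀).2 with hvstar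
  set cc := cp (aK η₀) (pt η₀).1 with hcc
  set w := (η₀.1 : Equiv.Perm (Fin n)) istar with hw
  obtain ⟨sσ, hsσH, hsσw⟩ := hH istar w
  set a : W := mkW (fun _ => cc) sσ (fun _ => hcp (aK η₀) (pt η₀).1) hsσH with hadef
  refine ⟨(vstar, istar), a, ?_⟩
  have hsubI : I ⊆ (fun g => a * g) '' stabSet W (vstar, istar) := by
    intro σ hσ
    set η : πI := ⟨ηOf σ, ⟨σ, hσ, rfl⟩⟩ with hηdef
    have hgpC : gp σ (pt η).1 ∈ Cf η := by
      have h0 := (f3 η (kOf σ)).mp (kOf_mem σ hσ)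
      rwa [cp_mkK (gp σ) (hgp σ)] at h0
    have hieq : (pt η).1 = istar := hA η η₀
    rw [hieq] at hgpC
    have hgpC0 : gp σ istar ∈ Cf η₀ := hC2 η₀ η hgpC
    obtain ⟨z, ⟨hzG, hzv⟩, hze⟩ := hgpC0
    have hhw : hp σ istar = w := by
      have h1 := hB η η₀
      rw [hieq] at h1
      exact h1
    have hsw : sσ⁻¹ w = istar := by
      rw [← hsσw]
      simp
    refine ⟨a⁻¹ * σ, ?_, by group⟩
    show ((a⁻¹ * σ : W) : Equiv.Perm (V × Fin n)) (vstar, istar) = (vstar, istar)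
    show ((wreathPerm (fun _ : Fin n => cc) sσ)⁻¹ * (σ : Equiv.Perm (V × Fin n)))
      (vstar, istar) = (vstar, istar)
    rw [heq σ, wreathPerm_inv, Equiv.Perm.mul_apply, wreathPerm_apply, wreathPerm_apply]
    show ((cc⁻¹ : Equiv.Perm V) (gp σ istar vstar), sσ⁻¹ (hp σ istar)) = (vstar, istar)
    rw [hhw, hsw, ← hze]
    show ((cc⁻¹ : Equiv.Perm V) (cc (z vstar)), istar) = (vstar, istar)
    rw [hzv]
    simp [hvstar]
  have hcoset_card :
      Nat.card ((fun g => a * g) '' stabSet W (vstar, istar)) = Nat.card I := by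
    rw [card_image_mul_left, card_stabSet_wreathProd G H vstar istar,
      card_stabSet_intProd_congr hG ⟨istar, vstar⟩ ⟨i₀, v₀⟩, hstabH istar,
      ← hMdef, Nat.mul_comm, hIcard]
  apply Set.eq_of_subset_of_ncard_le hsubI
  rw [← Nat.card_coe_set_eq, ← Nat.card_coe_set_eq, hcoset_card]
end

section
/- Let H ≤ Sₙ be a transitive permutation group having the strict-EKR-property that contains an element fixing exactly one point of {1,…,n}. Then the wreath product S₂ ≀ H, acting on {1,2} × {1,…,n} by ((g₁,…,gₙ),h)·(a,i) = (g_i(a), h(i)), has the strict-EKR-property. -/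
/-! ### Auxiliary material for Statement 17 -/

namespace S2wrAux

lemma perm2_eq_of_apply_eq : ∀ (x y : Equiv.Perm (Fin 2)) (a : Fin 2), x a = y a → x = y := by
  decide

lemma perm2_swap_mul_ne : ∀ (x : Equiv.Perm (Fin 2)), Equiv.swap 0 1 * x ≠ x := by decide

lemma perm2_eq_one_of_fix : ∀ (x : Equiv.Perm (Fin 2)) (a : Fin 2), x a = a → x = 1 := by decide

lemma perm2_ne_one : ∀ (x : Equiv.Perm (Fin 2)), x ≠ 1 → x = Equiv.swap 0 1 := by decide

variable {n : ℕ} (H : Subgroup (Equiv.Perm (Fin n)))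

/-- notation for the acting wreath product -/
abbrev W := wreathProd (⊤ : Subgroup (Equiv.Perm (Fin 2))) H

/-- parameter space -/
abbrev P := (Fin n → Equiv.Perm (Fin 2)) × ↥H

lemma wreathPerm_injective {V : Type*} [Nonempty V] {g g' : Fin n → Equiv.Perm V}
    {h h' : Equiv.Perm (Fin n)} (he : wreathPerm g h = wreathPerm g' h') :
    g = g' ∧ h = h' := by
  constructor
  · funext i
    apply Equiv.ext; intro a
    have := congrArg (fun σ : Equiv.Perm (V × Fin n) => σ (a, i)) he
    exact (Prod.ext_iff.1 this).1
  · apply Equiv.ext; intro i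
    obtain ⟨a⟩ := ‹Nonempty V›
    have := congrArg (fun σ : Equiv.Perm (V × Fin n) => σ (a, i)) he
    exact (Prod.ext_iff.1 this).2

/-- The parametrization of `S₂ ≀ H`. -/
noncomputable def eW : P H ≃ ↥(W H) :=
  Equiv.ofBijective
    (fun p => ⟨wreathPerm p.1 (p.2 : Equiv.Perm (Fin n)),
      ⟨p.1, p.2, fun _ => trivial, p.2.2, rfl⟩⟩)
    (by
      constructor
      · rintro ⟨g, h⟩ ⟨g', h'⟩ he
        have he' : wreathPerm g (h : Equiv.Perm (Fin n)) = wreathPerm g' (h' : Equiv.Perm (Fin n)) :=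
          congrArg Subtype.val he
        obtain ⟨h1, h2⟩ := wreathPerm_injective he'
        exact Prod.ext h1 (Subtype.ext h2)
      · rintro ⟨σ, g, h, -, hh, rfl⟩
        exact ⟨(g, ⟨h, hh⟩), rfl⟩)

lemma eW_apply (p : P H) (a : Fin 2) (i : Fin n) :
    ((eW H p : ↥(W H)) : Equiv.Perm (Fin 2 × Fin n)) (a, i)
      = (p.1 i a, (p.2 : Equiv.Perm (Fin n)) i) := rfl

lemma eW_one : eW H ((fun _ => 1), (1 : ↥H)) = 1 := by
  apply Subtype.ext
  apply Equiv.ext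
  rintro ⟨a, i⟩
  rfl


/-! #### Generic lemmas about intersecting sets and stabilizers -/

section Generic
variable {V : Type*} (G : Subgroup (Equiv.Perm V))

lemma stabSet_one (v : V) : (1 : ↥G) ∈ stabSet G v := rfl

lemma stabSet_mul {v : V} {x y : ↥G} (hx : x ∈ stabSet G v) (hy : y ∈ stabSet G v) :
    x * y ∈ stabSet G v := by
  simp only [stabSet, Set.mem_setOf_eq] at *
  simp [hx, hy]

lemma stabSet_inv {v : V} {x : ↥G} (hx : x ∈ stabSet G v) : x⁻¹ ∈ stabSet G v := by
  simp only [stabSet, Set.mem_setOf_eq] at *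
  conv_lhs => rw [← hx]
  simp

lemma stabSet_intersecting (v : V) : IsIntersecting G (stabSet G v) := by
  intro g hg h hh
  exact ⟨v, hg.trans hh.symm⟩

lemma smul_stabSet_self {v : V} {a : ↥G} (ha : a ∈ stabSet G v) :
    (fun g => a * g) '' stabSet G v = stabSet G v := by
  ext x
  constructor
  · rintro ⟨y, hy, rfl⟩
    exact stabSet_mul G ha hy
  · intro hx
    exact ⟨a⁻¹ * x, stabSet_mul G (stabSet_inv G ha) hx, by group⟩

lemma intersecting_smul {I : Set ↥G} (hI : IsIntersecting G I) (a : ↥G) :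
    IsIntersecting G ((fun g => a * g) '' I) := by
  rintro - ⟨g, hg, rfl⟩ - ⟨h, hh, rfl⟩
  obtain ⟨v, hv⟩ := hI g hg h hh
  exact ⟨v, by simp [hv]⟩

lemma ncard_smul (I : Set ↥G) (a : ↥G) : ((fun g => a * g) '' I).ncard = I.ncard :=
  Set.ncard_image_of_injective I (mul_right_injective a)

end Generic

/-! #### EKR bound for a group with the strict EKR property -/

section EKRH
variable {n : ℕ} {H : Subgroup (Equiv.Perm (Fin n))}

lemma stab_card_eq (hH : IsTransitive H) (v w : Fin n) :
    (stabSet H v).ncard = (stabSet H w).ncard := by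
  obtain ⟨t, ht, htv⟩ := hH v w
  have himg : (fun g : ↥H => (⟨t, ht⟩ : ↥H) * g * (⟨t, ht⟩ : ↥H)⁻¹) '' stabSet H v
      = stabSet H w := by
    ext x
    constructor
    · rintro ⟨y, hy, rfl⟩
      have hy' : (y : Equiv.Perm (Fin n)) v = v := hy
      show ((((⟨t, ht⟩ : ↥H) * y * (⟨t, ht⟩ : ↥H)⁻¹ : ↥H)) : Equiv.Perm (Fin n)) w = w
      have : t.symm w = v := by rw [← htv]; simp
      simp [this, hy', htv]
    · intro hx
      have hx' : (x : Equiv.Perm (Fin n)) w = w := hx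
      refine ⟨(⟨t, ht⟩ : ↥H)⁻¹ * x * ⟨t, ht⟩, ?_, by group⟩
      show ((((⟨t, ht⟩ : ↥H)⁻¹ * x * (⟨t, ht⟩ : ↥H) : ↥H)) : Equiv.Perm (Fin n)) v = v
      simp [htv, hx']
      rw [← htv]; simp
  have hinj : Function.Injective
      (fun g : ↥H => (⟨t, ht⟩ : ↥H) * g * (⟨t, ht⟩ : ↥H)⁻¹) := by
    intro x y hxy
    simpa using mul_left_cancel (mul_right_cancel hxy)
  rw [← himg, Set.ncard_image_of_injective _ hinj]

lemma ekr_bound (hH : IsTransitive H) (hstrict : HasStrictEKR H) :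
    ∀ v : Fin n, ∀ J : Set ↥H, IsIntersecting H J → J.ncard ≤ (stabSet H v).ncard := by
  classical
  have : Finite ↥H := inferInstance
  have := Fintype.ofFinite ↥H
  -- pick a maximum intersecting finset
  set 𝒮 : Finset (Finset ↥H) :=
    Finset.univ.filter (fun s : Finset ↥H => IsIntersecting H ↑s) with h𝒮
  have hne : 𝒮.Nonempty := by
    refine ⟨∅, ?_⟩
    simp only [h𝒮, Finset.mem_filter, Finset.mem_univ, true_and]
    intro g hg
    simp at hg
  obtain ⟨s, hs, hsmax⟩ := 𝒮.exists_max_image Finset.card hne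
  have hsint : IsIntersecting H ↑s := by
    simpa only [h𝒮, Finset.mem_filter, Finset.mem_univ, true_and] using hs
  have hcard : ∀ J : Set ↥H, IsIntersecting H J → J.ncard ≤ s.card := by
    intro J hJ
    have : J.toFinset ∈ 𝒮 := by
      simp only [h𝒮, Finset.mem_filter, Finset.mem_univ, true_and]
      simpa [Set.coe_toFinset] using hJ
    have := hsmax _ this
    simpa [Set.ncard_eq_toFinset_card'] using this
  obtain ⟨w, a, hw⟩ := hstrict (↑s) hsint (by
    intro J hJ
    rw [Nat.card_coe_set_eq, Nat.card_coe_set_eq, Set.ncard_coe_finset]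
    exact hcard J hJ)
  have hscard : s.card = (stabSet H w).ncard := by
    have := congrArg Set.ncard hw
    rwa [Set.ncard_coe_finset, ncard_smul] at this
  intro v J hJ
  calc J.ncard ≤ s.card := hcard J hJ
    _ = (stabSet H w).ncard := hscard
    _ = (stabSet H v).ncard := stab_card_eq hH w v

end EKRH

/-! #### The pairing bound -/

lemma half_bound {n : ℕ} (A : Finset (Fin n → Equiv.Perm (Fin 2)))
    (hA : ∀ g ∈ A, ∀ g' ∈ A, ∃ i, g i = g' i) : 2 * A.card ≤ 2 ^ n := by
  classical
  set ν : (Fin n → Equiv.Perm (Fin 2)) → (Fin n → Equiv.Perm (Fin 2)) :=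
    fun g i => Equiv.swap 0 1 * g i with hν
  have hinj : Function.Injective ν := by
    intro x y hxy
    funext i
    have := congrFun hxy i
    exact mul_left_cancel this
  have hdisj : Disjoint A (A.image ν) := by
    rw [Finset.disjoint_left]
    rintro x hx hx'
    obtain ⟨g, hg, rfl⟩ := Finset.mem_image.1 hx'
    obtain ⟨i, hi⟩ := hA g hg (ν g) hx
    exact perm2_swap_mul_ne (g i) hi.symm
  have := Finset.card_le_univ (A ∪ A.image ν)
  rw [Finset.card_union_of_disjoint hdisj, Finset.card_image_of_injective _ hinj] at this
  have hcard : Fintype.card (Fin n → Equiv.Perm (Fin 2)) = 2 ^ n := by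
    rw [Fintype.card_fun, Fintype.card_perm, Fintype.card_fin, Fintype.card_fin]
    norm_num [Nat.factorial]
  omega


/-! #### Stabilizers of the wreath product in parameter coordinates -/

section SWsec
variable {n : ℕ} (H : Subgroup (Equiv.Perm (Fin n)))

def half (j : Fin n) : Set (Fin n → Equiv.Perm (Fin 2)) := {g | g j = 1}

def SW (j : Fin n) : Set (P H) :=
  half j ×ˢ {h : ↥H | (h : Equiv.Perm (Fin n)) j = j}

lemma eW_image_SW (j : Fin n) :
    eW H '' SW H j = stabSet (W H) ((0 : Fin 2), j) := by
  ext σ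
  constructor
  · rintro ⟨⟨g, h⟩, ⟨hg, hh⟩, rfl⟩
    show ((eW H (g, h) : ↥(W H)) : Equiv.Perm (Fin 2 × Fin n)) (0, j) = (0, j)
    rw [eW_apply]
    show (g j 0, (h : Equiv.Perm (Fin n)) j) = (0, j)
    have hg1 : g j = 1 := hg
    have hh1 : (h : Equiv.Perm (Fin n)) j = j := hh
    rw [hg1, hh1]
    rfl
  · intro hσ
    obtain ⟨p, rfl⟩ := (eW H).surjective σ
    refine ⟨p, ?_, rfl⟩
    have h1 : ((eW H p : ↥(W H)) : Equiv.Perm (Fin 2 × Fin n)) (0, j) = (0, j) := hσ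
    rw [eW_apply] at h1
    obtain ⟨h2, h3⟩ := Prod.ext_iff.1 h1
    exact ⟨perm2_eq_one_of_fix _ _ h2, h3⟩

lemma ncard_SW (j : Fin n) :
    (SW H j).ncard = (half j).ncard * (stabSet H j).ncard := by
  rw [← Nat.card_coe_set_eq, ← Nat.card_coe_set_eq, ← Nat.card_coe_set_eq]
  unfold SW
  rw [Nat.card_congr (Equiv.Set.prod _ _), Nat.card_prod]
  rfl

lemma two_mul_ncard_half (j : Fin n) : 2 * (half j).ncard = 2 ^ n := by
  classical
  set Af : Finset (Fin n → Equiv.Perm (Fin 2)) :=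
    Finset.univ.filter (fun g => g j = 1) with hAf
  set Bf : Finset (Fin n → Equiv.Perm (Fin 2)) :=
    Finset.univ.filter (fun g => ¬ g j = 1) with hBf
  have hhalf : (half j).ncard = Af.card := by
    rw [show half j = ↑Af by ext g; simp [half, hAf], Set.ncard_coe_finset]
  have hAB : Af.card = Bf.card := by
    apply Finset.card_nbij' (fun g => fun i => Equiv.swap 0 1 * g i)
      (fun g => fun i => Equiv.swap 0 1 * g i)
    · intro g hg
      simp only [hAf, Finset.mem_coe, Finset.mem_filter, Finset.mem_univ, true_and] at hg
      simp only [hBf, Finset.mem_coe, Finset.mem_filter, Finset.mem_univ, true_and, hg]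
      decide
    · intro g hg
      simp only [hBf, Finset.mem_coe, Finset.mem_filter, Finset.mem_univ, true_and] at hg
      simp only [hAf, Finset.mem_coe, Finset.mem_filter, Finset.mem_univ, true_and]
      rw [perm2_ne_one _ hg]
      decide
    · intro g _
      funext i
      show Equiv.swap 0 1 * (Equiv.swap 0 1 * g i) = g i
      generalize g i = x
      revert x; decide
    · intro g _
      funext i
      show Equiv.swap 0 1 * (Equiv.swap 0 1 * g i) = g i
      generalize g i = x
      revert x; decide
  have hsplit := Finset.card_filter_add_card_filter_not
    (s := (Finset.univ : Finset (Fin n → Equiv.Perm (Fin 2)))) (p := fun g => g j = 1)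
  have hcard : Fintype.card (Fin n → Equiv.Perm (Fin 2)) = 2 ^ n := by
    rw [Fintype.card_fun, Fintype.card_perm, Fintype.card_fin, Fintype.card_fin]
    norm_num [Nat.factorial]
  rw [Finset.card_univ, hcard] at hsplit
  rw [hhalf, two_mul]
  nth_rewrite 2 [hAB]
  exact hsplit

end SWsec


/-! #### The core argument -/

lemma core {n : ℕ} (H : Subgroup (Equiv.Perm (Fin n)))
    (hH : IsTransitive H) (hstrict : HasStrictEKR H)
    (hfix : ∃ h ∈ H, ∃! i : Fin n, h i = i)
    (I : Set ↥(W H)) (hI : IsIntersecting (W H) I)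
    (hImax : ∀ J : Set ↥(W H), IsIntersecting (W H) J → Nat.card J ≤ Nat.card I)
    (h1 : (1 : ↥(W H)) ∈ I) :
    ∃ x, I = stabSet (W H) x := by
  classical
  obtain ⟨h0, hh0, i0, hfix0, huniq⟩ := hfix
  -- move to parameter coordinates
  set J : Set (P H) := eW H ⁻¹' I with hJdef
  have hJI : eW H '' J = I := by
    rw [hJdef, Set.image_preimage_eq _ (eW H).surjective]
  have hcardJI : J.ncard = I.ncard := by
    rw [← hJI, Set.ncard_image_of_injective _ (eW H).injective]
  have hJint : ∀ p ∈ J, ∀ q ∈ J, ∃ i, p.1 i = q.1 i ∧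
      (p.2 : Equiv.Perm (Fin n)) i = (q.2 : Equiv.Perm (Fin n)) i := by
    intro p hp q hq
    obtain ⟨⟨a, i⟩, hv⟩ := hI (eW H p) hp (eW H q) hq
    rw [eW_apply, eW_apply] at hv
    obtain ⟨h2, h3⟩ := Prod.ext_iff.1 hv
    exact ⟨i, perm2_eq_of_apply_eq _ _ _ h2, h3⟩
  have hJ1 : ((fun _ => 1 : Fin n → Equiv.Perm (Fin 2)), (1 : ↥H)) ∈ J := by
    show eW H _ ∈ I
    rw [eW_one]
    exact h1
  -- Finset world
  have hfinH := Fintype.ofFinite ↥H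
  set Jf := (Set.toFinite J).toFinset with hJfdef
  have hJfcoe : (↑Jf : Set (P H)) = J := Set.Finite.coe_toFinset _
  have hJfmem : ∀ p : P H, p ∈ Jf ↔ p ∈ J := fun p => Set.Finite.mem_toFinset _
  set Bf := Jf.image Prod.snd with hBfdef
  set B : Set ↥H := Prod.snd '' J with hBdef
  have hBcoe : (↑Bf : Set ↥H) = B := by rw [hBfdef, Finset.coe_image, hJfcoe]
  -- fibers
  have hfibcard : ∀ h : ↥H,
      ((Jf.filter (fun p => p.2 = h)).image Prod.fst).card
        = (Jf.filter (fun p => p.2 = h)).card := by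
    intro h
    apply Finset.card_image_of_injOn
    rintro ⟨g1, k1⟩ hm1 ⟨g2, k2⟩ hm2 hfst
    simp only [Finset.coe_filter, Set.mem_setOf_eq] at hm1 hm2
    simp only at hfst
    exact Prod.ext hfst (hm1.2.trans hm2.2.symm)
  have hfibint : ∀ h : ↥H, ∀ g ∈ (Jf.filter (fun p => p.2 = h)).image Prod.fst,
      ∀ g' ∈ (Jf.filter (fun p => p.2 = h)).image Prod.fst, ∃ i, g i = g' i := by
    intro h g hg g' hg'
    obtain ⟨p, hp, rfl⟩ := Finset.mem_image.1 hg
    obtain ⟨q, hq, rfl⟩ := Finset.mem_image.1 hg'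
    simp only [Finset.mem_filter] at hp hq
    obtain ⟨i, hi, -⟩ := hJint p ((hJfmem p).1 hp.1) q ((hJfmem q).1 hq.1)
    exact ⟨i, hi⟩
  have hfib : ∀ h ∈ Bf, 2 * (Jf.filter (fun p => p.2 = h)).card ≤ 2 ^ n := by
    intro h _
    rw [← hfibcard h]
    exact half_bound _ (hfibint h)
  -- the sum over fibers
  have hsum : Jf.card = ∑ h ∈ Bf, (Jf.filter (fun p => p.2 = h)).card :=
    Finset.card_eq_sum_card_fiberwise (fun p hp => Finset.mem_image_of_mem _ hp)
  have hupper : 2 * Jf.card ≤ Bf.card * 2 ^ n := by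
    rw [hsum, Finset.mul_sum]
    calc ∑ h ∈ Bf, 2 * (Jf.filter (fun p => p.2 = h)).card
        ≤ ∑ _h ∈ Bf, 2 ^ n := Finset.sum_le_sum hfib
      _ = Bf.card * 2 ^ n := by rw [Finset.sum_const, smul_eq_mul]
  -- the EKR bound for `H`
  have hekr := ekr_bound hH hstrict
  have hBint : IsIntersecting H B := by
    rintro - ⟨p, hp, rfl⟩ - ⟨q, hq, rfl⟩
    obtain ⟨i, -, hi⟩ := hJint p hp q hq
    exact ⟨i, hi⟩
  set m := (stabSet H i0).ncard with hmdef
  have hBle : Bf.card ≤ m := by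
    rw [← Set.ncard_coe_finset, hBcoe]
    exact hekr i0 B hBint
  -- the lower bound coming from a stabilizer of the wreath product
  have hlow : (half i0).ncard * m ≤ I.ncard := by
    have h1' := hImax _ (stabSet_intersecting (W H) ((0 : Fin 2), i0))
    rw [Nat.card_coe_set_eq, Nat.card_coe_set_eq, ← eW_image_SW,
      Set.ncard_image_of_injective _ (eW H).injective, ncard_SW] at h1'
    exact h1'
  have hJfc : Jf.card = I.ncard := by rw [← hcardJI, ← hJfcoe, Set.ncard_coe_finset]
  have hhalf2 := two_mul_ncard_half (n := n) i0
  -- equality chain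
  have hchain1 : 2 ^ n * m ≤ 2 * Jf.card := by
    rw [hJfc, ← hhalf2]
    calc 2 * (half i0).ncard * m = 2 * ((half i0).ncard * m) := by ring
      _ ≤ 2 * I.ncard := by omega
  have hBeq : Bf.card = m := by
    have h2 : 2 ^ n * m ≤ Bf.card * 2 ^ n := le_trans hchain1 hupper
    rw [mul_comm (Bf.card)] at h2
    have := Nat.le_of_mul_le_mul_left h2 (by positivity)
    omega
  have hculm : 2 * Jf.card = 2 ^ n * m := by
    refine le_antisymm ?_ hchain1
    calc 2 * Jf.card ≤ Bf.card * 2 ^ n := hupper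
      _ = 2 ^ n * m := by rw [hBeq, mul_comm]
  -- every fiber over `Bf` has the maximum size; in particular the fiber over 1
  have h1Bf : (1 : ↥H) ∈ Bf := by
    rw [hBfdef]
    exact Finset.mem_image_of_mem _ ((hJfmem _).2 hJ1)
  have hfib1 : 2 * (Jf.filter (fun p => p.2 = 1)).card = 2 ^ n := by
    by_contra hne
    have hlt : 2 * (Jf.filter (fun p => p.2 = 1)).card < 2 ^ n :=
      lt_of_le_of_ne (hfib 1 h1Bf) hne
    have hslt : ∑ h ∈ Bf, 2 * (Jf.filter (fun p => p.2 = h)).card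
        < ∑ _h ∈ Bf, 2 ^ n :=
      Finset.sum_lt_sum hfib ⟨1, h1Bf, hlt⟩
    rw [Finset.sum_const, smul_eq_mul, ← Finset.mul_sum, ← hsum, hculm, hBeq,
      mul_comm] at hslt
    exact lt_irrefl _ hslt
  -- `B` is a maximum intersecting set of `H`, hence a stabilizer
  have hBmax : ∀ J' : Set ↥H, IsIntersecting H J' → Nat.card J' ≤ Nat.card B := by
    intro J' hJ'
    rw [Nat.card_coe_set_eq, Nat.card_coe_set_eq, ← hBcoe,
      Set.ncard_coe_finset, hBeq]
    exact hekr i0 J' hJ'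
  obtain ⟨v, a, hBcoset⟩ := hstrict B hBint hBmax
  have h1B : (1 : ↥H) ∈ B := ⟨_, hJ1, rfl⟩
  have ha : a ∈ stabSet H v := by
    rw [hBcoset] at h1B
    obtain ⟨s, hs, has⟩ := h1B
    have : a = s⁻¹ := eq_inv_of_mul_eq_one_left (by rw [← has])
    rw [this]
    exact stabSet_inv _ hs
  have hBstab : B = stabSet H v := by rw [hBcoset, smul_stabSet_self _ ha]
  -- conjugate the unique-fixed-point element into the stabilizer of `v`
  obtain ⟨t, ht, hti⟩ := hH i0 v
  set T : Equiv.Perm (Fin n) := t * h0 * t⁻¹ with hTdef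
  have hTH : T ∈ H := H.mul_mem (H.mul_mem ht hh0) (H.inv_mem ht)
  have htinv : t⁻¹ v = i0 := by rw [← hti]; simp
  have hTv : T v = v := by
    show t (h0 (t⁻¹ v)) = v
    rw [htinv, hfix0, hti]
  have hTuniq : ∀ x, T x = x → x = v := by
    intro x hx
    have hx2 : t (h0 (t⁻¹ x)) = x := hx
    have hx3 : h0 (t⁻¹ x) = t⁻¹ x := by
      have := congrArg (fun y => t⁻¹ y) hx2
      simpa using this
    have := huniq _ hx3
    rw [← hti, ← this]
    simp
  have hTB : (⟨T, hTH⟩ : ↥H) ∈ B := by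
    rw [hBstab]
    exact hTv
  obtain ⟨pT, hpT, hpTe⟩ := hTB
  -- the fiber over 1 is pinned to the halfspace
  have hF1pin : ∀ g : Fin n → Equiv.Perm (Fin 2),
      (g, (1 : ↥H)) ∈ J → g v = pT.1 v := by
    intro g hg
    obtain ⟨i, hgi, hhi⟩ := hJint (g, 1) hg pT hpT
    have hTi : T i = i := by
      have : ((1 : ↥H) : Equiv.Perm (Fin n)) i = (pT.2 : Equiv.Perm (Fin n)) i := hhi
      rw [hpTe] at this
      simpa using this.symm
    have hiv : i = v := hTuniq i hTi
    rw [← hiv]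
    exact hgi
  have hgTv : pT.1 v = 1 := (hF1pin _ hJ1).symm
  have hF1half : ∀ g : Fin n → Equiv.Perm (Fin 2),
      (g, (1 : ↥H)) ∈ J → g ∈ half v := by
    intro g hg
    exact (hF1pin g hg).trans hgTv
  -- the fiber over 1 equals the halfspace
  set F1 : Set (Fin n → Equiv.Perm (Fin 2)) := {g | (g, (1 : ↥H)) ∈ J} with hF1def
  have hF1coe : F1 = ↑((Jf.filter (fun p => p.2 = 1)).image Prod.fst) := by
    ext g
    simp only [hF1def, Set.mem_setOf_eq, Finset.coe_image, Set.mem_image,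
      Finset.mem_coe, Finset.mem_filter]
    constructor
    · intro hg
      exact ⟨(g, 1), ⟨(hJfmem _).2 hg, rfl⟩, rfl⟩
    · rintro ⟨⟨g', k⟩, ⟨hmem, hk⟩, rfl⟩
      simp only at hk
      rw [← hk]
      exact (hJfmem _).1 hmem
  have hF1card : F1.ncard = (half v).ncard := by
    have hv2 := two_mul_ncard_half (n := n) v
    have hv0 := two_mul_ncard_half (n := n) i0
    rw [hF1coe, Set.ncard_coe_finset, hfibcard]
    omega
  have hF1eq : F1 = half v := by
    apply Set.eq_of_subset_of_ncard_le
    · intro g hg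
      exact hF1half g hg
    · rw [hF1card]
    · exact Set.toFinite _
  -- every element of `J` lies in `SW H v`
  have hJSW : J ⊆ SW H v := by
    rintro ⟨g, h⟩ hgh
    have hhB : h ∈ B := ⟨(g, h), hgh, rfl⟩
    rw [hBstab] at hhB
    refine ⟨?_, hhB⟩
    -- g v = 1
    by_contra hgv
    have hswap := perm2_ne_one _ hgv
    set g' : Fin n → Equiv.Perm (Fin 2) :=
      fun i => if i = v then 1 else Equiv.swap 0 1 * g i with hg'def
    have hg'half : g' ∈ half v := by simp [hg'def, half]
    have hg'J : (g', (1 : ↥H)) ∈ J := by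
      rw [← hF1eq] at hg'half
      exact hg'half
    obtain ⟨i, hgi, hhi⟩ := hJint (g, h) hgh (g', 1) hg'J
    by_cases hiv : i = v
    · subst hiv
      rw [hg'def] at hgi
      simp only [if_pos rfl] at hgi
      exact hgv hgi
    · rw [hg'def] at hgi
      simp only [if_neg hiv] at hgi
      exact perm2_swap_mul_ne (g i) hgi.symm
  -- conclude
  have hIsub : I ⊆ stabSet (W H) ((0 : Fin 2), v) := by
    rw [← hJI, ← eW_image_SW]
    exact Set.image_mono hJSW
  have hstc := hImax _ (stabSet_intersecting (W H) ((0 : Fin 2), v))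
  rw [Nat.card_coe_set_eq, Nat.card_coe_set_eq] at hstc
  exact ⟨_, Set.eq_of_subset_of_ncard_le hIsub hstc (Set.toFinite _)⟩

end S2wrAux

/-- If `H ≤ Sₙ` is transitive, has the strict-EKR-property and contains
an element fixing exactly one point, then `S₂ ≀ H` has the strict-EKR-property. -/
theorem S2_wr_H_hasStrictEKR {n : ℕ} (H : Subgroup (Equiv.Perm (Fin n)))
    (hH : IsTransitive H) (hstrict : HasStrictEKR H)
    (hfix : ∃ h ∈ H, ∃! i : Fin n, h i = i) :
    HasStrictEKR (wreathProd (⊤ : Subgroup (Equiv.Perm (Fin 2))) H) := by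
  intro I hI hImax
  classical
  obtain ⟨h0, hh0, i0, -, -⟩ := id hfix
  have hn : 0 < n := i0.pos
  -- `I` is nonempty
  have hst := S2wrAux.stabSet_intersecting (S2wrAux.W H) ((0 : Fin 2), i0)
  have hpos : 0 < Nat.card (stabSet (S2wrAux.W H) ((0 : Fin 2), i0)) := by
    have h1 : (1 : ↥(S2wrAux.W H)) ∈ stabSet (S2wrAux.W H) ((0 : Fin 2), i0) :=
      S2wrAux.stabSet_one _ _
    have : Nonempty ↥(stabSet (S2wrAux.W H) ((0 : Fin 2), i0)) := ⟨⟨1, h1⟩⟩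
    exact Nat.card_pos
  have hIne : I.Nonempty := by
    rcases Set.eq_empty_or_nonempty I with hIe | hIne
    · exfalso
      have := lt_of_lt_of_le hpos (hImax _ hst)
      rw [hIe] at this
      simp at this
    · exact hIne
  obtain ⟨w0, hw0⟩ := hIne
  -- translate so that the identity belongs to the intersecting set
  set I' : Set ↥(S2wrAux.W H) := (fun g => w0⁻¹ * g) '' I with hI'def
  have hI'int : IsIntersecting (S2wrAux.W H) I' := S2wrAux.intersecting_smul _ hI _
  have hI'card : Nat.card I' = Nat.card I := by
    rw [Nat.card_coe_set_eq, Nat.card_coe_set_eq, hI'def,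
      S2wrAux.ncard_smul]
  have hI'max : ∀ J : Set ↥(S2wrAux.W H), IsIntersecting (S2wrAux.W H) J →
      Nat.card J ≤ Nat.card I' := by
    intro J hJ
    rw [hI'card]
    exact hImax J hJ
  have h1' : (1 : ↥(S2wrAux.W H)) ∈ I' := ⟨w0, hw0, by simp⟩
  obtain ⟨x, hx⟩ := S2wrAux.core H hH hstrict hfix I' hI'int hI'max h1'
  refine ⟨x, w0, ?_⟩
  rw [← hx, hI'def, Set.image_image]
  simp
end
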